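/- For every integer n ≥ 2, the group with presentation ⟨S, T, U ∣ S^n = T² = U² = STU⟩ is isomorphic to the generalized quaternion group of order 4n. -/

import Mathlib

/-- The relators `S^n(T²)⁻¹, T²(U²)⁻¹, U²(STU)⁻¹` of the presentation
`⟨S,T,U ∣ Sⁿ = T² = U² = STU⟩`, with `S, T, U` the generators `0, 1, 2`. -/
def quaternionRels (n : ℕ) : Set (FreeGroup (Fin 3)) :=
  {FreeGroup.of 0 ^ n * (FreeGroup.of 1 ^ 2)⁻¹,
   FreeGroup.of 1 ^ 2 * (FreeGroup.of 2 ^ 2)⁻¹,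
   FreeGroup.of 2 ^ 2 * (FreeGroup.of 0 * FreeGroup.of 1 * FreeGroup.of 2)⁻¹}

/-- For `n ≥ 2`, the group `⟨S,T,U ∣ Sⁿ = T² = U² = STU⟩` is isomorphic to the
generalized quaternion group of order `4n`. -/
theorem presentedGroup_iso_quaternionGroup (n : ℕ) (hn : 2 ≤ n) :
    Nonempty (PresentedGroup (quaternionRels n) ≃* QuaternionGroup n) := by
  haveI : NeZero (2 * n) := ⟨by omega⟩
  haveI : Fact (1 < 2 * n) := ⟨by omega⟩
  set s : PresentedGroup (quaternionRels n) := .of 0 with hs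
  set t : PresentedGroup (quaternionRels n) := .of 1 with hts
  set u : PresentedGroup (quaternionRels n) := .of 2 with hus
  have hmk : ∀ r ∈ quaternionRels n, PresentedGroup.mk (quaternionRels n) r = 1 := by
    intro r hr
    exact (QuotientGroup.eq_one_iff r).2 (Subgroup.subset_normalClosure hr)
  have h1 : s ^ n = t ^ 2 := by
    have := hmk _ (show _ ∈ quaternionRels n by left; rfl)
    simp only [PresentedGroup.of, map_mul, map_pow, map_inv, mul_inv_eq_one] at this
    exact this
  have h2 : t ^ 2 = u ^ 2 := by
    have := hmk _ (show _ ∈ quaternionRels n by right; left; rfl)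
    simp only [PresentedGroup.of, map_mul, map_pow, map_inv, mul_inv_eq_one] at this
    exact this
  have h3 : u ^ 2 = s * t * u := by
    have := hmk _ (show _ ∈ quaternionRels n by right; right; rfl)
    simp only [PresentedGroup.of, map_mul, map_pow, map_inv, mul_inv_eq_one] at this
    exact this
  have ht : t = s⁻¹ * u := by
    have hu : u = s * t := by
      have : u * u = (s * t) * u := by rw [← sq, h3]
      exact mul_right_cancel this
    rw [hu]; group
  have hconj : u * s = s⁻¹ * u := by
    have key : t * t = u * u := by rw [← sq, ← sq, h2]
    have h4 : s⁻¹ * u * s⁻¹ = u := by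
      apply mul_right_cancel (b := u)
      calc s⁻¹ * u * s⁻¹ * u = (s⁻¹ * u) * (s⁻¹ * u) := by group
        _ = t * t := by rw [← ht]
        _ = u * u := key
    rw [eq_inv_mul_iff_mul_eq]
    calc s * (u * s) = s * (s⁻¹ * u * s⁻¹ * s) * s * s⁻¹ := by rw [h4]; group
      _ = u * s * s⁻¹ := by group
      _ = u := by group
  have hconjpow : ∀ k : ℕ, u * s ^ k = (s ^ k)⁻¹ * u := by
    intro k
    induction k with
    | zero => simp
    | succ k ih =>
      rw [pow_succ, ← mul_assoc, ih, mul_assoc, hconj, ← mul_assoc]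
      group
  have hsn : s ^ n = u * u := by rw [h1, h2, sq]
  have hord : s ^ (2 * n) = 1 := by
    have h5 : u * (u * u) = u⁻¹ := by
      have := hconjpow n
      rw [hsn] at this
      simpa [mul_assoc, mul_inv_rev] using this
    rw [two_mul, pow_add, hsn]
    calc u * u * (u * u) = u * (u * (u * u)) := by group
      _ = u * u⁻¹ := by rw [h5]
      _ = 1 := mul_inv_cancel u
  have hpow : ∀ k : ℕ, s ^ k = s ^ (k % (2 * n)) := by
    intro k
    conv_lhs => rw [← Nat.div_add_mod k (2 * n)]
    rw [pow_add, pow_mul, hord, one_pow, one_mul]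
  set φ : ZMod (2 * n) → PresentedGroup (quaternionRels n) := fun i => s ^ i.val with hφ
  have hA : ∀ i j : ZMod (2 * n), φ (i + j) = φ i * φ j := by
    intro i j
    show s ^ (i + j).val = s ^ i.val * s ^ j.val
    rw [ZMod.val_add, ← hpow, pow_add]
  have hB : ∀ i j : ZMod (2 * n), φ (j - i) = (φ i)⁻¹ * φ j := by
    intro i j
    rw [eq_inv_mul_iff_mul_eq, ← hA, add_sub_cancel]
  have hφ0 : φ 0 = 1 := by show s ^ (0 : ZMod (2 * n)).val = 1; rw [ZMod.val_zero, pow_zero]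
  have hφn : φ (n : ZMod (2 * n)) = u * u := by
    show s ^ ((n : ZMod (2 * n)).val) = u * u
    rw [ZMod.val_natCast, ← hpow, hsn]
  have hφu : ∀ i : ZMod (2 * n), φ i * u = u * (φ i)⁻¹ := by
    intro i
    have h := hconjpow i.val
    rw [eq_mul_inv_iff_mul_eq]
    show φ i * u * s ^ i.val = u
    rw [mul_assoc, h, ← mul_assoc]
    show s ^ i.val * (s ^ i.val)⁻¹ * u = u
    rw [mul_inv_cancel, one_mul]
  -- the homomorphism from the quaternion group to the presented group
  let G : QuaternionGroup n →* PresentedGroup (quaternionRels n) :=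
    MonoidHom.mk' (fun q => match q with
      | .a i => φ i
      | .xa i => u * φ i) (by
        rintro (i | i) (j | j)
        · rw [QuaternionGroup.a_mul_a]
          exact hA i j
        · rw [QuaternionGroup.a_mul_xa]
          show u * φ (j - i) = φ i * (u * φ j)
          rw [hB, ← mul_assoc, ← hφu, mul_assoc]
        · rw [QuaternionGroup.xa_mul_a]
          show u * φ (i + j) = (u * φ i) * φ j
          rw [hA, mul_assoc]
        · rw [QuaternionGroup.xa_mul_xa]
          show φ ((n : ZMod (2 * n)) + j - i) = (u * φ i) * (u * φ j)
          rw [add_sub_assoc, hA, hφn, hB]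
          calc u * u * ((φ i)⁻¹ * φ j) = u * (u * (φ i)⁻¹) * φ j := by group
            _ = u * (φ i * u) * φ j := by rw [← hφu]
            _ = (u * φ i) * (u * φ j) := by group)
  -- the homomorphism from the presented group to the quaternion group
  have hrels : ∀ r ∈ quaternionRels n,
      FreeGroup.lift ![(QuaternionGroup.a 1 : QuaternionGroup n), QuaternionGroup.xa 1, QuaternionGroup.xa 0] r = 1 := by
    rintro r (rfl | rfl | rfl) <;>
      simp [map_mul, map_pow, sq, QuaternionGroup.a_one_pow, ← mul_inv_rev, mul_inv_eq_one]
  let F : PresentedGroup (quaternionRels n) →* QuaternionGroup n := PresentedGroup.toGroup hrels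
  have hF0 : F s = QuaternionGroup.a 1 := PresentedGroup.toGroup.of hrels
  have hF1 : F t = QuaternionGroup.xa 1 := PresentedGroup.toGroup.of hrels
  have hF2 : F u = QuaternionGroup.xa 0 := PresentedGroup.toGroup.of hrels
  have hval1 : ((1 : ZMod (2 * n))).val = 1 := ZMod.val_one _
  have hGF : ∀ x, G (F x) = x := by
    have : G.comp F = MonoidHom.id _ := by
      apply PresentedGroup.ext
      intro x
      fin_cases x
      · show G (F s) = s
        rw [hF0]
        show φ 1 = s
        show s ^ (1 : ZMod (2 * n)).val = s
        rw [hval1, pow_one]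
      · show G (F t) = t
        rw [hF1]
        show u * φ 1 = t
        show u * s ^ (1 : ZMod (2 * n)).val = t
        rw [hval1, pow_one, hconj, ← ht]
      · show G (F u) = u
        rw [hF2]
        show u * φ 0 = u
        rw [hφ0, mul_one]
    intro x
    exact DFunLike.congr_fun this x
  have hFG : ∀ q, F (G q) = q := by
    rintro (i | i)
    · show F (φ i) = QuaternionGroup.a i
      show F (s ^ i.val) = _
      rw [map_pow, hF0, QuaternionGroup.a_one_pow, ZMod.natCast_val, ZMod.cast_id]
    · show F (u * φ i) = QuaternionGroup.xa i
      show F (u * s ^ i.val) = _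
      rw [map_mul, map_pow, hF0, hF2, QuaternionGroup.a_one_pow,
        QuaternionGroup.xa_mul_a, zero_add, ZMod.natCast_val, ZMod.cast_id]
  exact ⟨⟨⟨F, G, hGF, hFG⟩, map_mul F⟩⟩
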